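/- With n = 4 and k = 2 (the 3-dimensional lens space L₄³ = S³/ℤ₄, with the charge doubled to 2 by the Spin-ℤ₈ structure): ηD(4,2,2) − ηD(4,2,0) = −1/2. (Combined with the index values Index^D(ℍP²) = 0 and Index^RS(ℍP²) = −1, this gives the value 1/2 ∈ ℝ/ℤ of the type IIB duality anomaly on the generator ℍP² × L₄³ of a ℤ₂ factor of the bordism group Ω₁₁^{Spin-GL⁺(2,ℤ)}.) -/
import Mathlib


open scoped BigOperators
/-- The Atiyah–Patodi–Singer eta invariant of the charge-`q` Dirac operator on the
lens space `L_n^{2k-1} = S^{2k-1}/ℤ_n`. -/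
noncomputable def etaD (n k : ℕ) (q : ℤ) : ℂ :=
  -(1 / ((n : ℂ) * Complex.I ^ k)) *
    ∑ j ∈ Finset.Icc 1 (n - 1),
      Complex.exp (-(2 * (Real.pi : ℂ) * Complex.I * (q : ℂ) * (j : ℂ)) / (n : ℂ)) /
        (2 * ((Real.sin (Real.pi * (j : ℝ) / (n : ℝ)) : ℝ) : ℂ)) ^ k

/-- On the 3-dimensional lens space `L₄³ = S³/ℤ₄` (with the charge doubled to `2`
by the Spin-ℤ₈ structure), the difference of the eta invariants of the charge-`2`
and charge-`0` Dirac operators equals `-1/2`. -/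
theorem etaD_L4_3 : etaD 4 2 2 - etaD 4 2 0 = -(1 / 2) := by
  have hicc : Finset.Icc 1 (4-1) = ({1,2,3} : Finset ℕ) := by decide
  have e1 : Complex.exp (-((Real.pi:ℂ)*Complex.I)) = -1 := by
    rw [Complex.exp_neg, Complex.exp_pi_mul_I]; norm_num
  have e2 : Complex.exp (-(2*(Real.pi:ℂ)*Complex.I)) = 1 := by
    rw [show -(2*(Real.pi:ℂ)*Complex.I) = (-1:ℤ) * (2*(Real.pi:ℂ)*Complex.I) by push_cast; ring,
      Complex.exp_int_mul_two_pi_mul_I]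
  have e3 : Complex.exp (-(3*(Real.pi:ℂ)*Complex.I)) = -1 := by
    rw [show -(3*(Real.pi:ℂ)*Complex.I) = -((Real.pi:ℂ)*Complex.I) + (-1:ℤ)*(2*(Real.pi:ℂ)*Complex.I) by push_cast; ring,
      Complex.exp_add, e1, Complex.exp_int_mul_two_pi_mul_I, mul_one]
  have s1 : Real.sin (Real.pi * ((1:ℕ):ℝ) / ((4:ℕ):ℝ)) = Real.sqrt 2 / 2 := by
    rw [show Real.pi * ((1:ℕ):ℝ) / ((4:ℕ):ℝ) = Real.pi/4 by push_cast; ring, Real.sin_pi_div_four]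
  have s2 : Real.sin (Real.pi * ((2:ℕ):ℝ) / ((4:ℕ):ℝ)) = 1 := by
    rw [show Real.pi * ((2:ℕ):ℝ) / ((4:ℕ):ℝ) = Real.pi / 2 by push_cast; ring, Real.sin_pi_div_two]
  have s3 : Real.sin (Real.pi * ((3:ℕ):ℝ) / ((4:ℕ):ℝ)) = Real.sqrt 2 / 2 := by
    rw [show Real.pi * ((3:ℕ):ℝ) / ((4:ℕ):ℝ) = Real.pi - Real.pi/4 by push_cast; ring, Real.sin_pi_sub,
      Real.sin_pi_div_four]
  have h2 : ((Real.sqrt 2 : ℝ) : ℂ)^2 = 2 := by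
    rw [← Complex.ofReal_pow, Real.sq_sqrt (by norm_num)]; norm_num
  simp only [etaD, hicc,
    Finset.sum_insert (show (1:ℕ) ∉ ({2,3}:Finset ℕ) by decide),
    Finset.sum_insert (show (2:ℕ) ∉ ({3}:Finset ℕ) by decide),
    Finset.sum_singleton]
  rw [show (-(2 * (Real.pi : ℂ) * Complex.I * ((2:ℤ) : ℂ) * ((1:ℕ) : ℂ)) / ((4:ℕ) : ℂ)) = -((Real.pi:ℂ)*Complex.I) by push_cast; ring,
    show (-(2 * (Real.pi : ℂ) * Complex.I * ((2:ℤ) : ℂ) * ((2:ℕ) : ℂ)) / ((4:ℕ) : ℂ)) = -(2*(Real.pi:ℂ)*Complex.I) by push_cast; ring,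
    show (-(2 * (Real.pi : ℂ) * Complex.I * ((2:ℤ) : ℂ) * ((3:ℕ) : ℂ)) / ((4:ℕ) : ℂ)) = -(3*(Real.pi:ℂ)*Complex.I) by push_cast; ring,
    e1, e2, e3, s1, s2, s3]
  simp only [Int.cast_zero, mul_zero, zero_mul, neg_zero, zero_div, Complex.exp_zero]
  rw [Complex.I_sq]
  push_cast
  rw [show (2 * ((Real.sqrt 2:ℂ) / 2))^2 = ((Real.sqrt 2:ℝ):ℂ)^2 by ring, h2]
  norm_num
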